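/- The weakly increasing 6-tuples (x_1, ..., x_6) of positive integers satisfying 2/x_1 + 2/x_2 + 2/x_3 + 2/x_4 + 2/x_5 + 1/x_6 = 1 and such that x_6/x_i is the square of a positive integer for every i are exactly (11,11,11,11,11,11) and (3,27,27,27,27,27). -/

import Mathlib

set_option maxHeartbeats 1000000

private lemma sq_dvd_three {a b : ℕ} (h : a ^ 2 ∣ 3 * b ^ 2) : a ∣ b := by
  rcases Nat.eq_zero_or_pos a with rfl | ha
  · have h0 : 3 * b ^ 2 = 0 := by simpa using h
    have hb2 : b ^ 2 = 0 := by omega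
    have : b = 0 := by
      rcases Nat.eq_zero_or_pos b with rfl | hb
      · rfl
      · exfalso; have := pow_pos hb 2; omega
    simp [this]
  set g := Nat.gcd a b with hgd
  have hg : 0 < g := Nat.gcd_pos_of_pos_left b ha
  obtain ⟨a', ha'⟩ : ∃ a', a = g * a' := Nat.gcd_dvd_left a b
  obtain ⟨b', hb'⟩ : ∃ b', b = g * b' := Nat.gcd_dvd_right a b
  have hda : a / g = a' := by rw [ha']; exact Nat.mul_div_cancel_left _ hg
  have hdb : b / g = b' := by rw [hb']; exact Nat.mul_div_cancel_left _ hg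
  have hcop : Nat.Coprime a' b' := by
    have h1 := Nat.coprime_div_gcd_div_gcd (hgd ▸ hg)
    rwa [← hgd, hda, hdb] at h1
  have h2 : a' ^ 2 ∣ 3 * b' ^ 2 := by
    have hdd : g ^ 2 * a' ^ 2 ∣ g ^ 2 * (3 * b' ^ 2) := by
      have exl : g ^ 2 * a' ^ 2 = a ^ 2 := by rw [ha']; ring
      have exr : g ^ 2 * (3 * b' ^ 2) = 3 * b ^ 2 := by rw [hb']; ring
      rw [exl, exr]; exact h
    exact (mul_dvd_mul_iff_left (pow_pos hg 2).ne').mp hdd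
  have h3 : a' ^ 2 ∣ 3 := (Nat.Coprime.pow 2 2 hcop).dvd_of_dvd_mul_right h2
  have ha'pos : 0 < a' := by
    rcases Nat.eq_zero_or_pos a' with rfl | h'
    · simp at ha'; omega
    · exact h'
  have hle : a' ^ 2 ≤ 3 := Nat.le_of_dvd (by norm_num) h3
  have ha1 : a' = 1 := by
    by_contra hne
    have h2le : 2 ≤ a' := by omega
    have : 4 ≤ a' ^ 2 := by
      calc 4 = 2 ^ 2 := by norm_num
      _ ≤ a' ^ 2 := Nat.pow_le_pow_left h2le 2
    omega
  rw [ha', ha1, mul_one, hb']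
  exact dvd_mul_right _ _

private lemma odd_sq_mod8 {a : ℕ} (h : a % 2 = 1) : a ^ 2 % 8 = 1 := by
  obtain ⟨k, rfl⟩ : ∃ k, a = 2 * k + 1 := ⟨a / 2, by omega⟩
  rcases Nat.even_or_odd k with ⟨m, rfl⟩ | ⟨m, rfl⟩
  · have : (2 * (m + m) + 1) ^ 2 = 8 * (2 * m ^ 2 + m) + 1 := by ring
    omega
  · have : (2 * (2 * m + 1) + 1) ^ 2 = 8 * (2 * m ^ 2 + 3 * m + 1) + 1 := by ring
    omega

/-- MNSD rank `11` (`k = 5`): the weakly increasing `6`-tuples of positive integers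
with `2/x₁ + 2/x₂ + 2/x₃ + 2/x₄ + 2/x₅ + 1/x₆ = 1` and every `x₆ / xᵢ` a perfect
square of a positive integer are exactly `(11,11,11,11,11,11)` and `(3,27,27,27,27,27)`. -/
theorem mnsd_rank11_solutions (x1 x2 x3 x4 x5 x6 : ℕ) :
    (0 < x1 ∧ x1 ≤ x2 ∧ x2 ≤ x3 ∧ x3 ≤ x4 ∧ x4 ≤ x5 ∧ x5 ≤ x6 ∧
      (2 : ℚ) / x1 + 2 / x2 + 2 / x3 + 2 / x4 + 2 / x5 + 1 / x6 = 1 ∧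
      (∃ a : ℕ, 0 < a ∧ x6 = x1 * a ^ 2) ∧
      (∃ a : ℕ, 0 < a ∧ x6 = x2 * a ^ 2) ∧
      (∃ a : ℕ, 0 < a ∧ x6 = x3 * a ^ 2) ∧
      (∃ a : ℕ, 0 < a ∧ x6 = x4 * a ^ 2) ∧
      (∃ a : ℕ, 0 < a ∧ x6 = x5 * a ^ 2) ∧
      (∃ a : ℕ, 0 < a ∧ x6 = x6 * a ^ 2)) ↔
    ((x1, x2, x3, x4, x5, x6) = (11, 11, 11, 11, 11, 11) ∨
     (x1, x2, x3, x4, x5, x6) = (3, 27, 27, 27, 27, 27)) := by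
  constructor
  · rintro ⟨hp1, h12, h23, h34, h45, h56, heq,
      ⟨a1, hap1, e1⟩, ⟨a2, hap2, e2⟩, ⟨a3, hap3, e3⟩, ⟨a4, hap4, e4⟩, ⟨a5, hap5, e5⟩, -⟩
    have hp2 : 0 < x2 := lt_of_lt_of_le hp1 h12
    have hp3 : 0 < x3 := lt_of_lt_of_le hp2 h23
    have hp4 : 0 < x4 := lt_of_lt_of_le hp3 h34
    have hp5 : 0 < x5 := lt_of_lt_of_le hp4 h45
    have hp6 : 0 < x6 := lt_of_lt_of_le hp5 h56
    have q1 : (x1 : ℚ) ≠ 0 := Nat.cast_ne_zero.mpr hp1.ne'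
    have q2 : (x2 : ℚ) ≠ 0 := Nat.cast_ne_zero.mpr hp2.ne'
    have q3 : (x3 : ℚ) ≠ 0 := Nat.cast_ne_zero.mpr hp3.ne'
    have q4 : (x4 : ℚ) ≠ 0 := Nat.cast_ne_zero.mpr hp4.ne'
    have q5 : (x5 : ℚ) ≠ 0 := Nat.cast_ne_zero.mpr hp5.ne'
    have q6 : (x6 : ℚ) ≠ 0 := Nat.cast_ne_zero.mpr hp6.ne'
    have qa1 : (a1 : ℚ) ≠ 0 := Nat.cast_ne_zero.mpr hap1.ne'
    have qa2 : (a2 : ℚ) ≠ 0 := Nat.cast_ne_zero.mpr hap2.ne'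
    have qa3 : (a3 : ℚ) ≠ 0 := Nat.cast_ne_zero.mpr hap3.ne'
    have qa4 : (a4 : ℚ) ≠ 0 := Nat.cast_ne_zero.mpr hap4.ne'
    have qa5 : (a5 : ℚ) ≠ 0 := Nat.cast_ne_zero.mpr hap5.ne'
    have c1 : (x6 : ℚ) = (x1 : ℚ) * (a1 : ℚ) ^ 2 := by exact_mod_cast congrArg (Nat.cast : ℕ → ℚ) e1
    have c2 : (x6 : ℚ) = (x2 : ℚ) * (a2 : ℚ) ^ 2 := by exact_mod_cast congrArg (Nat.cast : ℕ → ℚ) e2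
    have c3 : (x6 : ℚ) = (x3 : ℚ) * (a3 : ℚ) ^ 2 := by exact_mod_cast congrArg (Nat.cast : ℕ → ℚ) e3
    have c4 : (x6 : ℚ) = (x4 : ℚ) * (a4 : ℚ) ^ 2 := by exact_mod_cast congrArg (Nat.cast : ℕ → ℚ) e4
    have c5 : (x6 : ℚ) = (x5 : ℚ) * (a5 : ℚ) ^ 2 := by exact_mod_cast congrArg (Nat.cast : ℕ → ℚ) e5
    have r1 : (2 : ℚ) / x1 = 2 * (a1 : ℚ) ^ 2 / x6 := by rw [c1]; field_simp
    have r2 : (2 : ℚ) / x2 = 2 * (a2 : ℚ) ^ 2 / x6 := by rw [c2]; field_simp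
    have r3 : (2 : ℚ) / x3 = 2 * (a3 : ℚ) ^ 2 / x6 := by rw [c3]; field_simp
    have r4 : (2 : ℚ) / x4 = 2 * (a4 : ℚ) ^ 2 / x6 := by rw [c4]; field_simp
    have r5 : (2 : ℚ) / x5 = 2 * (a5 : ℚ) ^ 2 / x6 := by rw [c5]; field_simp
    rw [r1, r2, r3, r4, r5, ← add_div, ← add_div, ← add_div,
      ← add_div, ← add_div, div_eq_one_iff_eq q6] at heq
    have E : x6 = 2 * a1 ^ 2 + 2 * a2 ^ 2 + 2 * a3 ^ 2 + 2 * a4 ^ 2 + 2 * a5 ^ 2 + 1 := by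
      exact_mod_cast heq.symm
    -- each ai divides x6, which is odd, so each ai is odd
    have hdvd : ∀ (x a : ℕ), x6 = x * a ^ 2 → a % 2 = 1 := by
      intro x a hxa
      rcases Nat.even_or_odd a with ⟨m, rfl⟩ | ⟨m, rfl⟩
      · exfalso
        have h2 : 2 ∣ x6 := ⟨x * m * m * 2, by rw [hxa]; ring⟩
        omega
      · omega
    have o1 : a1 % 2 = 1 := hdvd _ _ e1
    have o2 : a2 % 2 = 1 := hdvd _ _ e2
    have o3 : a3 % 2 = 1 := hdvd _ _ e3
    have o4 : a4 % 2 = 1 := hdvd _ _ e4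
    have o5 : a5 % 2 = 1 := hdvd _ _ e5
    -- ordering: a1 ≥ a2 ≥ a3 ≥ a4 ≥ a5
    have hord : ∀ (x y a b : ℕ), 0 < x → x ≤ y → x6 = x * a ^ 2 → x6 = y * b ^ 2 → b ≤ a := by
      intro x y a b hx hxy hxa hyb
      by_contra hab
      push_neg at hab
      have h1 : a ^ 2 < b ^ 2 := Nat.pow_lt_pow_left hab (by norm_num)
      have hlt : x * a ^ 2 < y * b ^ 2 :=
        lt_of_lt_of_le (mul_lt_mul_of_pos_left h1 hx) (Nat.mul_le_mul_right _ hxy)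
      exact absurd (hxa.symm.trans hyb) hlt.ne
    have b21 : a2 ≤ a1 := hord _ _ _ _ hp1 h12 e1 e2
    have b32 : a3 ≤ a2 := hord _ _ _ _ hp2 h23 e2 e3
    have b43 : a4 ≤ a3 := hord _ _ _ _ hp3 h34 e3 e4
    have b54 : a5 ≤ a4 := hord _ _ _ _ hp4 h45 e4 e5
    rcases eq_or_ne a1 1 with h1 | h1
    · -- all ai = 1, the (11,...,11) solution
      have hg : a2 = 1 ∧ a3 = 1 ∧ a4 = 1 ∧ a5 = 1 := by omega
      obtain ⟨g2, g3, g4, g5⟩ := hg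
      subst h1 g2 g3 g4 g5
      norm_num at e1 e2 e3 e4 e5 E
      left
      simp only [Prod.mk.injEq]
      omega
    · -- a1 ≥ 3
      have ha13 : 3 ≤ a1 := by omega
      have E' : x1 * a1 ^ 2 = 2 * a1 ^ 2 + 2 * a2 ^ 2 + 2 * a3 ^ 2 + 2 * a4 ^ 2 + 2 * a5 ^ 2 + 1 := by
        rw [← e1]; exact E
      have s21 : a2 ^ 2 ≤ a1 ^ 2 := Nat.pow_le_pow_left b21 2
      have s32 : a3 ^ 2 ≤ a2 ^ 2 := Nat.pow_le_pow_left b32 2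
      have s42 : a4 ^ 2 ≤ a2 ^ 2 := Nat.pow_le_pow_left (le_trans b43 b32) 2
      have s52 : a5 ^ 2 ≤ a2 ^ 2 := Nat.pow_le_pow_left (le_trans (le_trans b54 b43) b32) 2
      have h9 : 9 ≤ a1 ^ 2 := by
        calc 9 = 3 ^ 2 := by norm_num
        _ ≤ a1 ^ 2 := Nat.pow_le_pow_left ha13 2
      have hx1lt : x1 < 11 := by
        by_contra hc
        push_neg at hc
        have h11 : 11 * a1 ^ 2 ≤ x1 * a1 ^ 2 := Nat.mul_le_mul_right _ hc
        omega
      obtain ⟨k1, hk1⟩ : ∃ k, a1 ^ 2 = 8 * k + 1 := ⟨a1 ^ 2 / 8, by have := odd_sq_mod8 o1; omega⟩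
      obtain ⟨k2, hk2⟩ : ∃ k, a2 ^ 2 = 8 * k + 1 := ⟨a2 ^ 2 / 8, by have := odd_sq_mod8 o2; omega⟩
      obtain ⟨k3, hk3⟩ : ∃ k, a3 ^ 2 = 8 * k + 1 := ⟨a3 ^ 2 / 8, by have := odd_sq_mod8 o3; omega⟩
      obtain ⟨k4, hk4⟩ : ∃ k, a4 ^ 2 = 8 * k + 1 := ⟨a4 ^ 2 / 8, by have := odd_sq_mod8 o4; omega⟩
      obtain ⟨k5, hk5⟩ : ∃ k, a5 ^ 2 = 8 * k + 1 := ⟨a5 ^ 2 / 8, by have := odd_sq_mod8 o5; omega⟩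
      have hx13 : x1 = 3 := by
        rw [hk1, hk2, hk3, hk4, hk5] at E'
        interval_cases x1 <;> omega
      subst hx13
      have hane : a2 ≠ a1 := by
        intro hh
        rw [hh] at E'
        have h3p : 1 ≤ a3 ^ 2 := Nat.one_le_iff_ne_zero.mpr (pow_ne_zero _ hap3.ne')
        omega
      have ha2d : a2 ∣ a1 := by
        apply sq_dvd_three
        have hv : a2 ^ 2 ∣ x6 := ⟨x2, by rw [e2]; ring⟩
        rwa [e1] at hv
      obtain ⟨k, hk⟩ := ha2d
      have hk3' : 3 ≤ k := by
        rcases Nat.even_or_odd k with ⟨m, rfl⟩ | ⟨m, rfl⟩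
        · exfalso
          have : 2 ∣ a1 := ⟨a2 * m, by rw [hk]; ring⟩
          omega
        · rcases Nat.eq_zero_or_pos m with rfl | hm
          · exfalso
            simp at hk
            omega
          · omega
      have hge : 9 * a2 ^ 2 ≤ a1 ^ 2 := by
        have h3a : 3 * a2 ≤ a1 := by
          rw [hk]
          calc 3 * a2 = a2 * 3 := by ring
          _ ≤ a2 * k := Nat.mul_le_mul_left _ hk3'
        calc 9 * a2 ^ 2 = (3 * a2) ^ 2 := by ring
        _ ≤ a1 ^ 2 := Nat.pow_le_pow_left h3a 2
      have h2p : 1 ≤ a2 ^ 2 := Nat.one_le_iff_ne_zero.mpr (pow_ne_zero _ hap2.ne')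
      have ha2sq : a2 ^ 2 = 1 := by omega
      have ha2one : a2 = 1 := by
        by_contra hne
        have h2le : 2 ≤ a2 := by omega
        have : 4 ≤ a2 ^ 2 := by
          calc 4 = 2 ^ 2 := by norm_num
          _ ≤ a2 ^ 2 := Nat.pow_le_pow_left h2le 2
        omega
      have g3 : a3 = 1 := by omega
      have g4 : a4 = 1 := by omega
      have g5 : a5 = 1 := by omega
      subst ha2one g3 g4 g5
      have ha1sq : a1 ^ 2 = 9 := by omega
      have ha13' : a1 = 3 := by
        by_contra hne
        have h4le : 4 ≤ a1 := by omega
        have : 16 ≤ a1 ^ 2 := by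
          calc 16 = 4 ^ 2 := by norm_num
          _ ≤ a1 ^ 2 := Nat.pow_le_pow_left h4le 2
        omega
      subst ha13'
      norm_num at e1 e2 e3 e4 e5
      right
      simp only [Prod.mk.injEq]
      exact ⟨trivial, by omega, by omega, by omega, by omega, by omega⟩
  · rintro (h | h) <;>
      (simp only [Prod.mk.injEq] at h; obtain ⟨r1, r2, r3, r4, r5, r6⟩ := h;
        subst r1; subst r2; subst r3; subst r4; subst r5; subst r6)
    · refine ⟨by norm_num, by norm_num, by norm_num, by norm_num, by norm_num, by norm_num,
        by norm_num, ⟨1, by norm_num⟩, ⟨1, by norm_num⟩, ⟨1, by norm_num⟩, ⟨1, by norm_num⟩,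
        ⟨1, by norm_num⟩, ⟨1, by norm_num⟩⟩
    · exact ⟨by norm_num, by norm_num, by norm_num, by norm_num, by norm_num, by norm_num,
        by norm_num, ⟨3, by norm_num⟩, ⟨1, by norm_num⟩, ⟨1, by norm_num⟩, ⟨1, by norm_num⟩,
        ⟨1, by norm_num⟩, ⟨1, by norm_num⟩⟩
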